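/- Let X be a locally compact, first countable Hausdorff space, (x_n) a sequence in X, and I_φ an analytic P-ideal given by a lower semicontinuous submeasure φ with φ(ℕ) < ∞. Then every isolated point of the set of I_φ-cluster points of (x_n) is an I_φ-limit point of (x_n). -/

import Mathlib

open Filter Topology Set
open scoped ENNReal

/-- An ideal on ℕ: contains all finite sets, closed under subsets and finite
unions, and proper. -/
def IsIdeal (I : Set (Set ℕ)) : Prop :=
  (∀ A : Set ℕ, A.Finite → A ∈ I) ∧
  (∀ A B : Set ℕ, A ⊆ B → B ∈ I → A ∈ I) ∧
  (∀ A B : Set ℕ, A ∈ I → B ∈ I → A ∪ B ∈ I) ∧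
  (Set.univ : Set ℕ) ∉ I

/-- `ℓ` is an `I`-limit point of `x`: some subsequence indexed by a set not in
`I` converges to `ℓ`. -/
def ILimitPoint {X : Type*} [TopologicalSpace X] (I : Set (Set ℕ)) (x : ℕ → X) (ℓ : X) : Prop :=
  ∃ A : Set ℕ, A ∉ I ∧ Tendsto x (atTop ⊓ 𝓟 A) (𝓝 ℓ)

/-- `ℓ` is an `I`-cluster point of `x`. -/
def IClusterPoint {X : Type*} [TopologicalSpace X] (I : Set (Set ℕ)) (x : ℕ → X) (ℓ : X) : Prop :=
  ∀ U ∈ 𝓝 ℓ, {n | x n ∈ U} ∉ I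

/-- A lower semicontinuous submeasure on ℕ. -/
def IsLSCSubmeasure (φ : Set ℕ → ℝ≥0∞) : Prop :=
  φ ∅ = 0 ∧ (∀ A B : Set ℕ, A ⊆ B → φ A ≤ φ B) ∧
  (∀ A B : Set ℕ, φ (A ∪ B) ≤ φ A + φ B) ∧
  (∀ A : Set ℕ, Tendsto (fun n => φ (A ∩ Set.Iio n)) atTop (𝓝 (φ A)))

/-- `‖A‖_φ = lim_n φ(A \ {0,…,n-1})`, the limit of an antitone sequence,
realized as an infimum. -/
noncomputable def phiNorm (φ : Set ℕ → ℝ≥0∞) (A : Set ℕ) : ℝ≥0∞ :=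
  ⨅ n : ℕ, φ (A \ Set.Iio n)

/-- The ideal of sets of asymptotic density zero. -/
def I0 : Set (Set ℕ) :=
  {S : Set ℕ | Tendsto (fun n => (Nat.card ↥(S ∩ Set.Iio n) : ℝ) / n) atTop (𝓝 0)}

/-- `u(ℓ) := lim_k ‖{n : x n ∈ U_k}‖_φ` along a decreasing local base at `ℓ`;
its value is independent of the base and equals the infimum over all
neighborhoods. -/
noncomputable def uFun {X : Type*} [TopologicalSpace X] (φ : Set ℕ → ℝ≥0∞)
    (x : ℕ → X) (ℓ : X) : ℝ≥0∞ :=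
  ⨅ U ∈ 𝓝 ℓ, phiNorm φ {n | x n ∈ U}

/-- Isolated points of a set. -/
def isolatedPts {X : Type*} [TopologicalSpace X] (B : Set X) : Set X :=
  {b ∈ B | ∃ U ∈ 𝓝 b, U ∩ B = {b}}


section Aux
variable {φ : Set ℕ → ℝ≥0∞}

lemma phiNorm_mono' (hφ : IsLSCSubmeasure φ) {A B : Set ℕ} (h : A ⊆ B) :
    phiNorm φ A ≤ phiNorm φ B :=
  iInf_mono fun n => hφ.2.1 _ _ (diff_subset_diff_left h)

lemma phiNorm_le_phi' (hφ : IsLSCSubmeasure φ) (A : Set ℕ) : phiNorm φ A ≤ φ A :=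
  (iInf_le _ 0).trans (hφ.2.1 _ _ diff_subset)

lemma phiNorm_union_le' (hφ : IsLSCSubmeasure φ) (A B : Set ℕ) :
    phiNorm φ (A ∪ B) ≤ phiNorm φ A + phiNorm φ B := by
  have h : ∀ i j : ℕ, ∃ k, φ (A \ Set.Iio k) + φ (B \ Set.Iio k) ≤
      φ (A \ Set.Iio i) + φ (B \ Set.Iio j) := by
    intro i j
    refine ⟨max i j, add_le_add (hφ.2.1 _ _ ?_) (hφ.2.1 _ _ ?_)⟩ <;>
      exact diff_subset_diff_right (Set.Iio_subset_Iio (by omega))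
  rw [phiNorm, phiNorm, phiNorm]
  refine le_trans (iInf_mono fun n =>
    (hφ.2.1 _ _ (by rw [union_diff_distrib])).trans (hφ.2.2.1 _ _)) ?_
  exact le_of_eq (ENNReal.iInf_add_iInf h).symm

lemma phiNorm_empty' (hφ : IsLSCSubmeasure φ) : phiNorm φ ∅ = 0 :=
  le_antisymm ((phiNorm_le_phi' hφ ∅).trans_eq hφ.1) zero_le

lemma phiNorm_biUnion_finset' {ι : Type*} (hφ : IsLSCSubmeasure φ) (t : Finset ι)
    (f : ι → Set ℕ) (h : ∀ i ∈ t, phiNorm φ (f i) = 0) :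
    phiNorm φ (⋃ i ∈ t, f i) = 0 := by
  classical
  induction t using Finset.induction_on with
  | empty => simpa using phiNorm_empty' hφ
  | @insert b s hb ih =>
    rw [Finset.set_biUnion_insert]
    refine le_antisymm ?_ zero_le
    calc phiNorm φ (f b ∪ ⋃ i ∈ s, f i) ≤ phiNorm φ (f b) + phiNorm φ (⋃ i ∈ s, f i) :=
        phiNorm_union_le' hφ _ _
      _ = 0 := by
        rw [h b (Finset.mem_insert_self b s), ih (fun i hi => h i (Finset.mem_insert_of_mem hi)),
          add_zero]

end Aux

/-- in a locally compact first countable Hausdorff space, every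
isolated `I_φ`-cluster point is an `I_φ`-limit point. -/
theorem stmt12 {X : Type*} [TopologicalSpace X] [FirstCountableTopology X]
    [T2Space X] (hloc : ∀ a : X, ∃ U ∈ 𝓝 a, IsCompact (closure U))
    (x : ℕ → X) (φ : Set ℕ → ℝ≥0∞) (hφ : IsLSCSubmeasure φ) (hfin : φ Set.univ < ⊤)
    (ℓ : X) (hmem : ℓ ∈ isolatedPts {p : X | IClusterPoint {A : Set ℕ | phiNorm φ A = 0} x p}) :
    ILimitPoint {A : Set ℕ | phiNorm φ A = 0} x ℓ := by
  classical
  haveI : WeaklyLocallyCompactSpace X :=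
    ⟨fun a => let ⟨U, hU, hc⟩ := hloc a; ⟨closure U, hc, mem_of_superset hU subset_closure⟩⟩
  set I : Set (Set ℕ) := {A : Set ℕ | phiNorm φ A = 0} with hIdef
  obtain ⟨hℓC, W, hW, hWC⟩ := hmem
  obtain ⟨K, hKn, hKW, hKc⟩ := local_compact_nhds (x := ℓ) hW
  set a := phiNorm φ {n | x n ∈ K} with ha
  have haK : a ≠ 0 := hℓC K hKn
  have haT : a ≠ ⊤ :=
    ((phiNorm_le_phi' hφ _).trans_lt ((hφ.2.1 _ _ (subset_univ _)).trans_lt hfin)).ne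
  -- key claim: every neighborhood has phiNorm at least a
  have key : ∀ V ∈ 𝓝 ℓ, a ≤ phiNorm φ {n | x n ∈ V} := by
    intro V hV
    by_contra hb
    push_neg at hb
    set V' := interior V with hV'def
    have hV' : ℓ ∈ V' := mem_interior_iff_mem_nhds.2 hV
    have hKV : IsCompact (K \ V') := hKc.diff isOpen_interior
    have hcov : ∀ p ∈ K \ V', ∃ U ∈ 𝓝 p, phiNorm φ {n | x n ∈ U} = 0 := by
      intro p hp
      have hpC : ¬ IClusterPoint I x p := by
        intro hpc
        have hmem2 : p ∈ W ∩ {q : X | IClusterPoint I x q} := ⟨hKW hp.1, hpc⟩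
        rw [hWC] at hmem2
        exact hp.2 (hmem2 ▸ hV')
      rw [IClusterPoint] at hpC
      push_neg at hpC
      obtain ⟨U, hU, hU0⟩ := hpC
      exact ⟨U, hU, hU0⟩
    choose! Uf hUf hUf0 using hcov
    obtain ⟨t, ht⟩ := hKV.elim_nhds_subcover Uf (fun p hp => hUf p hp)
    have hBI : phiNorm φ {n | x n ∈ K \ V'} = 0 := by
      refine le_antisymm ?_ zero_le
      have hsub : {n | x n ∈ K \ V'} ⊆ ⋃ p ∈ t, {n | x n ∈ Uf p} := by
        intro n hn
        obtain ⟨p, hpt, hp⟩ := mem_iUnion₂.1 (ht.2 hn)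
        exact mem_iUnion₂.2 ⟨p, hpt, hp⟩
      calc phiNorm φ {n | x n ∈ K \ V'} ≤ phiNorm φ (⋃ p ∈ t, {n | x n ∈ Uf p}) :=
          phiNorm_mono' hφ hsub
        _ = 0 := phiNorm_biUnion_finset' hφ t _ (fun p hpt => hUf0 p (ht.1 p hpt))
    have hsplit : a ≤ phiNorm φ {n | x n ∈ K \ V'} + phiNorm φ {n | x n ∈ V'} := by
      refine le_trans (phiNorm_mono' hφ ?_) (phiNorm_union_le' hφ _ _)
      intro n hn
      by_cases h : x n ∈ V'
      · exact Or.inr h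
      · exact Or.inl ⟨hn, h⟩
    rw [hBI, zero_add] at hsplit
    refine absurd (hsplit.trans (phiNorm_mono' hφ ?_)) (not_le.2 hb)
    rw [hV'def]
    intro n hn
    have h1 : x n ∈ interior V := hn
    show x n ∈ V
    exact interior_subset h1
  -- antitone basis at ℓ
  obtain ⟨U, hU⟩ := (𝓝 ℓ).exists_antitone_basis
  set Ak : ℕ → Set ℕ := fun k => {n | x n ∈ U k} with hAk
  have haAk : ∀ k, a ≤ phiNorm φ (Ak k) := fun k => key _ (hU.mem k)
  have half_lt : a / 2 < a := ENNReal.half_lt_self haK haT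
  have half_ne : a / 2 ≠ 0 := by
    simp only [ne_eq, ENNReal.div_eq_zero_iff, ENNReal.ofNat_ne_top, or_false]
    exact haK
  have hstep : ∀ k m : ℕ, ∃ m', m < m' ∧ a / 2 ≤ φ ((Ak k \ Set.Iio m) ∩ Set.Iio m') := by
    intro k m
    have hge : a ≤ φ (Ak k \ Set.Iio m) := (haAk k).trans (iInf_le _ m)
    have hev : ∀ᶠ m' in atTop, a / 2 < φ ((Ak k \ Set.Iio m) ∩ Set.Iio m') :=
      (hφ.2.2.2 (Ak k \ Set.Iio m)).eventually (eventually_gt_nhds (half_lt.trans_le hge))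
    obtain ⟨m', hm'⟩ := ((eventually_gt_atTop m).and hev).exists
    exact ⟨m', hm'.1, hm'.2.le⟩
  choose! g hg1 hg2 using hstep
  set ns : ℕ → ℕ := fun k => Nat.rec 0 (fun k nk => g k nk) k with hns
  have hnsS : ∀ k, ns (k + 1) = g k (ns k) := fun k => rfl
  have hmono : StrictMono ns := strictMono_nat_of_lt_succ fun k => by
    rw [hnsS]; exact hg1 k (ns k)
  have hle : ∀ k, k ≤ ns k := fun k => by
    induction k with
    | zero => exact Nat.zero_le _
    | succ k ih => exact Nat.lt_of_le_of_lt ih (hmono (Nat.lt_succ_self k))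
  set A : Set ℕ := ⋃ k, Ak k ∩ Set.Ico (ns k) (ns (k + 1)) with hAdef
  refine ⟨A, ?_, ?_⟩
  · -- A ∉ I
    intro hA0
    have h2 : ∀ m, a / 2 ≤ φ (A \ Set.Iio m) := by
      intro m
      refine le_trans (hg2 m (ns m)) (hφ.2.1 _ _ ?_)
      rintro n ⟨⟨hn1, hn2⟩, hn3⟩
      simp only [Set.mem_Iio, not_lt] at hn2 hn3
      refine ⟨mem_iUnion.2 ⟨m, hn1, ?_⟩, ?_⟩
      · exact ⟨hn2, by rw [hnsS]; exact hn3⟩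
      · simp only [Set.mem_Iio, not_lt]
        exact (hle m).trans hn2
    have : a / 2 ≤ phiNorm φ A := le_iInf h2
    rw [hA0] at this
    exact half_ne (le_antisymm this zero_le)
  · -- convergence
    rw [Filter.tendsto_def]
    intro s hs
    obtain ⟨k, hk⟩ := hU.mem_iff.1 hs
    rw [mem_inf_principal]
    filter_upwards [eventually_ge_atTop (ns k)] with n hn hnA
    obtain ⟨j, hj1, hj2⟩ := mem_iUnion.1 hnA
    simp only [Set.mem_Ico] at hj2
    have hjk : k ≤ j := by
      by_contra h
      push_neg at h
      have := hmono.monotone (show j + 1 ≤ k from h)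
      omega
    exact hk (hU.antitone hjk hj1)
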